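/- Let E be an infinite-dimensional real Hilbert space. Then there exists a nonzero bounded linear functional ℓ on the Banach space of continuous bilinear forms E × E → ℝ (identified with E →L E →L ℝ) which vanishes on every decomposable form (x,y) ↦ φ(x)·ψ(y) for continuous linear functionals φ, ψ : E → ℝ. (Instance k = 2 of the lemma that all operational tangent space summands D^(k)₀E are nonzero for an infinite-dimensional Hilbert space.) -/

import Mathlib

set_option maxHeartbeats 1000000

open ContinuousLinearMap in
/-- For an infinite-dimensional real Hilbert space there is a nonzero bounded linear
functional on the space of continuous bilinear forms vanishing on all decomposable
forms (the operational tangent summand `D⁽²⁾₀E` is nonzero). -/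
theorem exists_functional_vanishing_on_decomposable {E : Type*}
    [NormedAddCommGroup E] [InnerProductSpace ℝ E] [CompleteSpace E]
    (hE : ¬ FiniteDimensional ℝ E) :
    ∃ l : (E →L[ℝ] E →L[ℝ] ℝ) →L[ℝ] ℝ, l ≠ 0 ∧
      ∀ φ ψ : E →L[ℝ] ℝ, l (φ.smulRight ψ) = 0 := by
  classical
  set D : Set (E →L[ℝ] E →L[ℝ] ℝ) := {T | ∃ φ ψ : E →L[ℝ] ℝ, T = φ.smulRight ψ} with hD
  set S₀ : Submodule ℝ (E →L[ℝ] E →L[ℝ] ℝ) := Submodule.span ℝ D with hS₀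
  haveI : ContinuousAdd (E →L[ℝ] E →L[ℝ] ℝ) :=
    ⟨(SeminormedAddCommGroup.toIsTopologicalAddGroup (E := E →L[ℝ] E →L[ℝ] ℝ)).continuous_add⟩
  set S : Submodule ℝ (E →L[ℝ] E →L[ℝ] ℝ) := S₀.topologicalClosure with hS
  set B : E →L[ℝ] E →L[ℝ] ℝ := (innerSL ℝ : E →L[ℝ] E →L[ℝ] ℝ) with hB
  -- every element of the span is killed on the diagonal by a common kernel vector
  have key : ∀ T ∈ S₀, ∃ (n : ℕ) (φ : Fin n → (E →L[ℝ] ℝ)),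
      ∀ x : E, (∀ i, φ i x = 0) → ∀ y : E, T x y = 0 := by
    intro T hT
    induction hT using Submodule.span_induction with
    | mem T hT =>
      obtain ⟨φ, ψ, rfl⟩ := hT
      refine ⟨1, fun _ => φ, fun x hx y => ?_⟩
      simp [ContinuousLinearMap.smulRight_apply, ContinuousLinearMap.smul_apply, hx 0]
    | zero => exact ⟨0, Fin.elim0, fun x _ y => rfl⟩
    | add T₁ T₂ _ _ ih₁ ih₂ =>
      obtain ⟨n₁, φ₁, h₁⟩ := ih₁
      obtain ⟨n₂, φ₂, h₂⟩ := ih₂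
      refine ⟨n₁ + n₂, Fin.append φ₁ φ₂, fun x hx y => ?_⟩
      have hx₁ : ∀ i, φ₁ i x = 0 := fun i => by
        simpa [Fin.append_left] using hx (Fin.castAdd n₂ i)
      have hx₂ : ∀ i, φ₂ i x = 0 := fun i => by
        simpa [Fin.append_right] using hx (Fin.natAdd n₁ i)
      simp only [ContinuousLinearMap.add_apply]
      rw [h₁ x hx₁ y, h₂ x hx₂ y, add_zero]
    | smul c T _ ih =>
      obtain ⟨n, φ, h⟩ := ih
      refine ⟨n, φ, fun x hx y => ?_⟩
      simp only [ContinuousLinearMap.smul_apply]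
      rw [h x hx y, smul_zero]
  -- distance from B to the span is at least 1
  have dist_ge : ∀ T ∈ S₀, (1 : ℝ) ≤ ‖B - T‖ := by
    intro T hT
    obtain ⟨n, φ, h⟩ := key T hT
    set L : E →ₗ[ℝ] (Fin n → ℝ) := LinearMap.pi (fun i => (φ i : E →ₗ[ℝ] ℝ)) with hL
    have hker : LinearMap.ker L ≠ ⊥ := by
      intro hk
      exact hE (FiniteDimensional.of_injective L (LinearMap.ker_eq_bot.mp hk))
    obtain ⟨x, hxL, hx0⟩ := (Submodule.ne_bot_iff _).mp hker
    set u : E := ‖x‖⁻¹ • x with hu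
    have hxnorm : ‖x‖ ≠ 0 := norm_ne_zero_iff.mpr hx0
    have hunorm : ‖u‖ = 1 := by
      rw [hu, norm_smul, norm_inv, norm_norm, inv_mul_cancel₀ hxnorm]
    have hφu : ∀ i, φ i u = 0 := by
      intro i
      have hx' : φ i x = 0 := congrFun hxL i
      simp [hu, map_smul, hx']
    have hTu : T u u = 0 := h u hφu u
    have hBu : B u u = 1 := by
      have h2 : B u u = ‖u‖ ^ 2 := by
        have : B u u = inner ℝ u u := rfl
        rw [this, real_inner_self_eq_norm_sq]
      rw [h2, hunorm]; norm_num
    have h1 : ((B - T) u) u = 1 := by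
      simp only [ContinuousLinearMap.sub_apply]
      rw [hBu, hTu, sub_zero]
    calc (1 : ℝ) = ‖((B - T) u) u‖ := by rw [h1]; simp
      _ ≤ ‖B - T‖ * ‖u‖ * ‖u‖ := ContinuousLinearMap.le_opNorm₂ _ _ _
      _ = ‖B - T‖ := by rw [hunorm]; ring
  -- hence B is not in the closure S
  have hBS : B ∉ S := by
    intro hmem
    have hmem' : B ∈ @closure _ (@UniformSpace.toTopologicalSpace _
        (@PseudoMetricSpace.toUniformSpace _ inferInstance))
        (S₀ : Set (E →L[ℝ] E →L[ℝ] ℝ)) := hmem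
    obtain ⟨T, hT, hd⟩ := Metric.mem_closure_iff.mp hmem' 1 one_pos
    have hd' : ‖B - T‖ < 1 := lt_of_eq_of_lt (dist_eq_norm B T).symm hd
    exact absurd (dist_ge T hT) (by linarith)
  -- separate B from the closed convex subspace S by Hahn-Banach
  have hSclosed : IsClosed (S : Set (E →L[ℝ] E →L[ℝ] ℝ)) := S₀.isClosed_topologicalClosure
  have hSconvex : Convex ℝ (S : Set (E →L[ℝ] E →L[ℝ] ℝ)) := S.convex
  obtain ⟨f, u, hfu, hub⟩ := geometric_hahn_banach_closed_point hSconvex hSclosed hBS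
  have hvanish : ∀ T ∈ S, f T = 0 := by
    intro T hT
    by_contra hne
    have ht : ((u + 1) / f T) • T ∈ S := S.smul_mem _ hT
    have := hfu _ ht
    rw [map_smul, smul_eq_mul, div_mul_cancel₀ _ hne] at this
    linarith
  have hu0 : (0 : ℝ) < u := by
    have := hfu 0 S.zero_mem
    simpa using this
  refine ⟨f, ?_, ?_⟩
  · intro h0
    rw [h0] at hub
    simp at hub
    linarith
  · intro φ ψ
    exact hvanish _ (Submodule.le_topologicalClosure S₀ (Submodule.subset_span ⟨φ, ψ, rfl⟩))
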